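/- In the complex reflection group G(n,n,n) with n ≥ 3, the scalar matrix g = ζ·I (ζ = e^{2πi/n}) is an atom of the codimension order: g ≠ 1, codim(g) = n, and there is no h ∈ G(n,n,n) with h ≠ 1, h ≠ g, and codim(h) + codim(h⁻¹g) = codim(g). -/

import Mathlib

open Module Matrix

noncomputable section

/-- The primitive m-th root of unity e^{2πi/m}. -/
def zeta (m : ℕ) : ℂ := Complex.exp (2 * Real.pi * Complex.I / m)

/-- codim of a matrix: n minus the dimension of its fixed space. -/
def codimM {n : ℕ} (M : Matrix (Fin n) (Fin n) ℂ) : ℕ :=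
  n - finrank ℂ (LinearMap.ker (M.mulVecLin - LinearMap.id))

/-- Membership in the monomial reflection group G(m,p,n): a monomial matrix with
entries m-th roots of unity whose nonzero entries multiply to an (m/p)-th root of unity. -/
def InG (m p n : ℕ) (M : Matrix (Fin n) (Fin n) ℂ) : Prop :=
  ∃ (σ : Equiv.Perm (Fin n)) (d : Fin n → ℂ),
    (∀ j, d j ^ m = 1) ∧ ((∏ j, d j) ^ (m / p) = 1) ∧
    ∀ i j, M i j = if i = σ j then d j else 0

/-- A reflection of G(m,p,n): a nonidentity element of the group fixing a hyperplane
pointwise (i.e. of codimension one). -/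
def IsReflM (m p n : ℕ) (M : Matrix (Fin n) (Fin n) ℂ) : Prop :=
  InG m p n M ∧ M ≠ 1 ∧ codimM M = 1

/-- Reflection length in G(m,p,n). -/
def reflLenM (m p n : ℕ) (M : Matrix (Fin n) (Fin n) ℂ) : ℕ :=
  sInf {k | ∃ l : List (Matrix (Fin n) (Fin n) ℂ),
    (∀ s ∈ l, IsReflM m p n s) ∧ l.length = k ∧ l.prod = M}

/-- Transposition-type reflection: swaps coordinates i and j scaling by ζ^a and ζ^{-a}. -/
def IsTranspRefl (m n : ℕ) (M : Matrix (Fin n) (Fin n) ℂ) : Prop :=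
  ∃ (i j : Fin n) (c : ℂ), i ≠ j ∧ c ^ m = 1 ∧
    M = Matrix.of (fun k l =>
      if k = i ∧ l = j then c
      else if k = j ∧ l = i then c⁻¹
      else if k = l ∧ k ≠ i ∧ k ≠ j then 1 else 0)

/-- The codimension order relation on matrices. -/
def codimLeM {n : ℕ} (a c : Matrix (Fin n) (Fin n) ℂ) : Prop :=
  codimM a + codimM (a⁻¹ * c) = codimM c

/-- Auxiliary: codim of the scalar matrix `c • 1` with `c ≠ 1` is `n`. -/
lemma codimM_scalar (n : ℕ) (c : ℂ) (hc : c ≠ 1) :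
    codimM (c • (1 : Matrix (Fin n) (Fin n) ℂ)) = n := by
  have hker : LinearMap.ker ((c • (1 : Matrix (Fin n) (Fin n) ℂ)).mulVecLin - LinearMap.id)
      = ⊥ := by
    rw [LinearMap.ker_eq_bot']
    intro v hv
    have hv' : c • v - v = 0 := by
      simpa [Matrix.mulVecLin_apply, Matrix.smul_mulVec, Matrix.one_mulVec] using hv
    have : (c - 1) • v = 0 := by
      rw [sub_smul, one_smul]; exact hv'
    rcases smul_eq_zero.1 this with h | h
    · exact absurd (sub_eq_zero.1 h) hc
    · exact h
  rw [codimM, hker, finrank_bot]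
  omega

theorem scalar_is_codim_atom_in_Gnnn (n : ℕ) (hn : 3 ≤ n)
    (g : Matrix (Fin n) (Fin n) ℂ) (hg : g = zeta n • (1 : Matrix (Fin n) (Fin n) ℂ)) :
    g ≠ 1 ∧ codimM g = n ∧
      ∀ h : Matrix (Fin n) (Fin n) ℂ, InG n n n h → h ≠ 1 → h ≠ g →
        ¬ codimLeM h g := by
  classical
  have hn0 : n ≠ 0 := by omega
  have hprim : IsPrimitiveRoot (zeta n) n := Complex.isPrimitiveRoot_exp n hn0
  have hζ1 : zeta n ≠ 1 := hprim.ne_one (by omega)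
  -- ζ ≠ -1
  have hζneg1 : (1 : ℂ) + zeta n ≠ 0 := by
    intro hcon
    have : zeta n ^ 2 = 1 := by
      have : zeta n = -1 := by linear_combination hcon
      rw [this]; ring
    have := hprim.dvd_of_pow_eq_one 2 this
    exact absurd (Nat.le_of_dvd (by norm_num) this) (by omega)
  have hgne1 : g ≠ 1 := by
    intro hcon
    have h00 : g ⟨0, by omega⟩ ⟨0, by omega⟩ = 1 := by rw [hcon]; simp [Matrix.one_apply]
    rw [hg] at h00
    simp [Matrix.one_apply] at h00
    exact hζ1 h00
  have hcodimg : codimM g = n := by rw [hg]; exact codimM_scalar n _ hζ1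
  refine ⟨hgne1, hcodimg, ?_⟩
  intro h hInG hne1 hneg hle
  obtain ⟨σ, d, hd, hprod, hM⟩ := hInG
  have hprod1 : (∏ j, d j) = 1 := by
    have : n / n = 1 := Nat.div_self (by omega)
    rwa [this, pow_one] at hprod
  have hdne : ∀ j, d j ≠ 0 := by
    intro j hj
    have := hd j
    rw [hj, zero_pow hn0] at this
    exact zero_ne_one this
  -- h = row-permuted diagonal; det is nonzero
  have hsub : h = (Matrix.diagonal d).submatrix ⇑σ.symm id := by
    ext i j
    rcases eq_or_ne i (σ j) with rfl | hne
    · simp [hM, Matrix.diagonal]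
    · have hj : j ≠ σ.symm i := by
        intro hj; exact hne (by rw [hj]; simp)
      simp [hM, Matrix.diagonal, hne, hj.symm]
  have hdet : IsUnit h.det := by
    rw [hsub, Matrix.det_permute, Matrix.det_diagonal]
    exact (IsUnit.mul (by rcases Int.units_eq_one_or (Equiv.Perm.sign σ.symm) with hs | hs <;>
      simp [hs]) (isUnit_iff_ne_zero.2 (Finset.prod_ne_zero_iff.2 fun j _ => hdne j)))
  have hinv : h * h⁻¹ = 1 := Matrix.mul_nonsing_inv h hdet
  have hinv' : h⁻¹ * h = 1 := Matrix.nonsing_inv_mul h hdet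
  -- the two kernels
  set K1 := LinearMap.ker (h.mulVecLin - LinearMap.id) with hK1
  set K2' := LinearMap.ker (h.mulVecLin - (zeta n) • LinearMap.id) with hK2'
  have hK1mem : ∀ v, v ∈ K1 ↔ h *ᵥ v = v := by
    intro v
    rw [hK1, LinearMap.mem_ker]
    constructor
    · intro hv; have := sub_eq_zero.1 hv; simpa [Matrix.mulVecLin_apply] using this
    · intro hv; simp [Matrix.mulVecLin_apply, hv]
  have hK2'mem : ∀ v, v ∈ K2' ↔ h *ᵥ v = zeta n • v := by
    intro v
    rw [hK2', LinearMap.mem_ker]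
    constructor
    · intro hv
      have := sub_eq_zero.1 hv
      simpa [Matrix.mulVecLin_apply] using this
    · intro hv; simp [Matrix.mulVecLin_apply, hv]
  -- identify the kernel for h⁻¹ * g
  have hkereq : LinearMap.ker ((h⁻¹ * g).mulVecLin - LinearMap.id) = K2' := by
    ext v
    rw [LinearMap.mem_ker, hK2'mem]
    constructor
    · intro hv
      have hv' : (h⁻¹ * g) *ᵥ v = v := by
        have := sub_eq_zero.1 hv; simpa [Matrix.mulVecLin_apply] using this
      have : h *ᵥ ((h⁻¹ * g) *ᵥ v) = h *ᵥ v := by rw [hv']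
      rw [Matrix.mulVec_mulVec, ← Matrix.mul_assoc, hinv, Matrix.one_mul, hg,
        Matrix.smul_mulVec, Matrix.one_mulVec] at this
      exact this.symm
    · intro hv
      have e1 : h⁻¹ *ᵥ (h *ᵥ v) = v := by
        rw [Matrix.mulVec_mulVec, hinv', Matrix.one_mulVec]
      have e2 : h⁻¹ *ᵥ (zeta n • v) = v := by rw [← hv, e1]
      have hv2 : (h⁻¹ * g) *ᵥ v = v := by
        rw [hg, Matrix.mul_smul, Matrix.mul_one, Matrix.smul_mulVec,
          ← Matrix.mulVec_smul, e2]
      simp [Matrix.mulVecLin_apply, hv2]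
  -- dimension count
  have hfin1 : finrank ℂ K1 ≤ n := by
    have := Submodule.finrank_le K1
    rwa [finrank_fin_fun] at this
  have hfin2 : finrank ℂ K2' ≤ n := by
    have := Submodule.finrank_le K2'
    rwa [finrank_fin_fun] at this
  have hsum : finrank ℂ K1 + finrank ℂ K2' = n := by
    have := hle
    rw [codimLeM, hcodimg, codimM, codimM, hkereq, ← hK1] at this
    omega
  -- disjointness
  have hdisj : K1 ⊓ K2' = ⊥ := by
    rw [Submodule.eq_bot_iff]
    intro v hv
    obtain ⟨hv1, hv2⟩ := Submodule.mem_inf.1 hv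
    rw [hK1mem] at hv1
    rw [hK2'mem] at hv2
    have heq : zeta n • v = v := hv2.symm.trans hv1
    have : (1 - zeta n) • v = 0 := by
      rw [sub_smul, one_smul, heq, sub_self]
    rcases smul_eq_zero.1 this with hc | hc
    · exact absurd (by linear_combination -hc : zeta n = 1) hζ1
    · exact hc
  have hsup : K1 ⊔ K2' = ⊤ := by
    apply Submodule.eq_top_of_finrank_eq
    have := Submodule.finrank_sup_add_finrank_inf_eq K1 K2'
    rw [hdisj, finrank_bot] at this
    rw [finrank_fin_fun]
    omega
  -- quadratic identity
  have hquad : ∀ v : Fin n → ℂ, h *ᵥ (h *ᵥ v) = (1 + zeta n) • (h *ᵥ v) - zeta n • v := by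
    intro v
    have hv : v ∈ K1 ⊔ K2' := hsup ▸ Submodule.mem_top
    obtain ⟨x, hx, y, hy, rfl⟩ := Submodule.mem_sup.1 hv
    rw [hK1mem] at hx
    rw [hK2'mem] at hy
    rw [Matrix.mulVec_add, hx, hy, Matrix.mulVec_add, hx, Matrix.mulVec_smul, hy]
    module
  -- evaluate on basis vectors
  have hbasis : ∀ j : Fin n, h *ᵥ Pi.single j 1 = d j • (Pi.single (σ j) 1 : Fin n → ℂ) := by
    intro j
    funext i
    rw [Matrix.mulVec_single]
    simp only [Pi.smul_apply, Pi.single_apply, smul_eq_mul, mul_one, hM]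
    by_cases hij : i = σ j <;> simp [hij, hM]
  -- no nontrivial permutation part
  have hfix : ∀ j, σ j = j := by
    intro j
    by_contra hne
    have := hquad (Pi.single j 1)
    rw [hbasis, Matrix.mulVec_smul, hbasis] at this
    have hcoord := congrFun this (σ j)
    have h1 : σ j ≠ σ (σ j) := fun hc => hne (σ.injective hc).symm
    simp only [Pi.smul_apply, Pi.sub_apply, Pi.single_apply, smul_eq_mul] at hcoord
    simp only [if_neg h1, if_pos rfl, if_neg hne, mul_zero, mul_one, sub_zero,
      if_true, eq_self_iff_true] at hcoord
    have : (1 + zeta n) * d j = 0 := by linear_combination -hcoord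
    rcases mul_eq_zero.1 this with hc | hc
    · exact hζneg1 hc
    · exact hdne j hc
  -- diagonal entries are 1 or ζ
  have hdval : ∀ j, d j = 1 ∨ d j = zeta n := by
    intro j
    have := hquad (Pi.single j 1)
    rw [hbasis, Matrix.mulVec_smul, hbasis, hfix j] at this
    have hcoord := congrFun this j
    simp only [Pi.smul_apply, Pi.sub_apply, Pi.single_apply, hfix j, if_pos rfl, smul_eq_mul,
      mul_one, if_true, eq_self_iff_true] at hcoord
    have : (d j - 1) * (d j - zeta n) = 0 := by linear_combination hcoord
    rcases mul_eq_zero.1 this with hc | hc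
    · exact Or.inl (by linear_combination hc)
    · exact Or.inr (by linear_combination hc)
  -- counting
  letI : DecidablePred (fun j : Fin n => d j = zeta n) := fun _ => Classical.dec _
  set S := Finset.univ.filter (fun j : Fin n => d j = zeta n) with hS
  have hprodS : (zeta n) ^ S.card = 1 := by
    have hsplit := Finset.prod_filter_mul_prod_filter_not Finset.univ
      (fun j : Fin n => d j = zeta n) d
    have h1 : ∏ j ∈ S, d j = (zeta n) ^ S.card := by
      rw [Finset.prod_congr rfl (fun j hj => (Finset.mem_filter.1 hj).2), Finset.prod_const]
    have h2 : ∏ j ∈ Finset.univ.filter (fun j : Fin n => ¬ d j = zeta n), d j = 1 := by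
      apply Finset.prod_eq_one
      intro j hj
      rcases hdval j with hv | hv
      · exact hv
      · exact absurd hv (Finset.mem_filter.1 hj).2
    rw [← hprod1, ← hsplit, h1, h2, mul_one]
  have hcardS : S.card = 0 ∨ S.card = n := by
    have hdvd := hprim.dvd_of_pow_eq_one S.card hprodS
    have hle' : S.card ≤ n := by
      rw [hS]
      simpa using Finset.card_filter_le Finset.univ (fun j : Fin n => d j = zeta n)
    rcases Nat.eq_zero_or_pos S.card with h0 | hpos
    · exact Or.inl h0
    · exact Or.inr (Nat.le_antisymm hle' (Nat.le_of_dvd hpos hdvd))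
  rcases hcardS with hc | hc
  · -- all d j = 1, so h = 1
    apply hne1
    have hall : ∀ j, d j = 1 := by
      intro j
      rcases hdval j with hv | hv
      · exact hv
      · exfalso
        have : j ∈ S := Finset.mem_filter.2 ⟨Finset.mem_univ j, hv⟩
        rw [Finset.card_eq_zero.1 hc] at this
        exact absurd this (Finset.notMem_empty j)
    ext i j
    rw [hM, hfix j, hall j, Matrix.one_apply]
  · -- all d j = ζ, so h = g
    apply hneg
    have hall : ∀ j, d j = zeta n := by
      intro j
      have : S = Finset.univ := Finset.eq_univ_of_card S (by simpa using hc)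
      have hj : j ∈ S := this ▸ Finset.mem_univ j
      exact (Finset.mem_filter.1 hj).2
    rw [hg]
    ext i j
    rw [hM, hfix j, hall j]
    by_cases hij : i = j <;> simp [Matrix.one_apply, hij]

end
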